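/- arXiv:1205.0101 — 6 statements merged into one kernel-verified Lean document; each statement's English description precedes it below -/
import Mathlib

section
/- Let (T, κ) be a monoidal monad on a monoidal category C and let (A,a), (B,b), (C,c) be T-algebras. A morphism f : A ⊗ B → C in C is a bimorphism (i.e. c · Tf · κ_{A,B} = f · (a ⊗ b)) if and only if both c · Tf · κ_{A,B} · (η_A ⊗ 1_{TB}) = f · (1_A ⊗ b) and c · Tf · κ_{A,B} · (1_{TA} ⊗ η_B) = f · (a ⊗ 1_B) hold. -/
open CategoryTheory Category MonoidalCategory Limits

universe v u

variable {C : Type u} [Category.{v} C] [MonoidalCategory C]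

/-- A monoidal-monad structure on a monad `T`: a natural family
`κ X Y : T X ⊗ T Y ⟶ T (X ⊗ Y)` making `(T, η_E, κ)` a monoidal functor and
compatible with the multiplication and unit of the monad. -/
structure MonoidalMonadStr (T : Monad C) where
  κ : ∀ X Y : C, T.obj X ⊗ T.obj Y ⟶ T.obj (X ⊗ Y)
  natural : ∀ {X Y X' Y' : C} (f : X ⟶ X') (g : Y ⟶ Y'),
      (T.map f ⊗ₘ T.map g) ≫ κ X' Y' = κ X Y ≫ T.map (f ⊗ₘ g)
  assoc : ∀ X Y Z : C,
      (α_ (T.obj X) (T.obj Y) (T.obj Z)).hom ≫ (𝟙 (T.obj X) ⊗ₘ κ Y Z) ≫ κ X (Y ⊗ Z)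
        = (κ X Y ⊗ₘ 𝟙 (T.obj Z)) ≫ κ (X ⊗ Y) Z ≫ T.map (α_ X Y Z).hom
  left_unit : ∀ X : C,
      (T.η.app (𝟙_ C) ⊗ₘ 𝟙 (T.obj X)) ≫ κ (𝟙_ C) X ≫ T.map (λ_ X).hom = (λ_ (T.obj X)).hom
  right_unit : ∀ X : C,
      (𝟙 (T.obj X) ⊗ₘ T.η.app (𝟙_ C)) ≫ κ X (𝟙_ C) ≫ T.map (ρ_ X).hom = (ρ_ (T.obj X)).hom
  mu : ∀ X Y : C,
      κ (T.obj X) (T.obj Y) ≫ T.map (κ X Y) ≫ T.μ.app (X ⊗ Y)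
        = (T.μ.app X ⊗ₘ T.μ.app Y) ≫ κ X Y
  unit : ∀ X Y : C, (T.η.app X ⊗ₘ T.η.app Y) ≫ κ X Y = T.η.app (X ⊗ Y)

/-- `f : A ⊗ B ⟶ C` is a bimorphism of `T`-algebras. -/
def IsBimorphism {T : Monad C} (κ : MonoidalMonadStr T) {A B Cc : Monad.Algebra T}
    (f : A.A ⊗ B.A ⟶ Cc.A) : Prop :=
  κ.κ A.A B.A ≫ T.map f ≫ Cc.a = (A.a ⊗ₘ B.a) ≫ f

/-- `f` is a bimorphism iff it is a `T`-algebra homomorphism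
in each variable separately. -/
theorem bimorphism_iff_homomorphism_in_each_variable
    (T : Monad C) (κ : MonoidalMonadStr T) (A B Cc : Monad.Algebra T)
    (f : A.A ⊗ B.A ⟶ Cc.A) :
    IsBimorphism κ f ↔
      ((T.η.app A.A ⊗ₘ 𝟙 (T.obj B.A)) ≫ κ.κ A.A B.A ≫ T.map f ≫ Cc.a
          = (𝟙 A.A ⊗ₘ B.a) ≫ f) ∧
      ((𝟙 (T.obj A.A) ⊗ₘ T.η.app B.A) ≫ κ.κ A.A B.A ≫ T.map f ≫ Cc.a
          = (A.a ⊗ₘ 𝟙 B.A) ≫ f) := by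
  constructor
  · intro h
    unfold IsBimorphism at h
    constructor
    · rw [h, tensorHom_comp_tensorHom_assoc, A.unit, id_comp]
    · rw [h, tensorHom_comp_tensorHom_assoc, B.unit, id_comp]
  · rintro ⟨h1, h2⟩
    unfold IsBimorphism
    symm
    calc (A.a ⊗ₘ B.a) ≫ f
        = (𝟙 (T.obj A.A) ⊗ₘ B.a) ≫ (A.a ⊗ₘ 𝟙 B.A) ≫ f := by
          rw [tensorHom_comp_tensorHom_assoc, id_comp, comp_id]
      _ = (𝟙 (T.obj A.A) ⊗ₘ B.a) ≫ (𝟙 (T.obj A.A) ⊗ₘ T.η.app B.A) ≫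
            κ.κ A.A B.A ≫ T.map f ≫ Cc.a := by rw [h2]
      _ = (𝟙 (T.obj A.A) ⊗ₘ (B.a ≫ T.η.app B.A)) ≫
            κ.κ A.A B.A ≫ T.map f ≫ Cc.a := by
          rw [id_tensor_comp, assoc]
      _ = (𝟙 (T.obj A.A) ⊗ₘ (T.η.app (T.obj B.A) ≫ T.map B.a)) ≫
            κ.κ A.A B.A ≫ T.map f ≫ Cc.a := by
          rw [show B.a ≫ T.η.app B.A = T.η.app (T.obj B.A) ≫ T.map B.a from
            by simpa using T.η.naturality B.a]
      _ = (𝟙 (T.obj A.A) ⊗ₘ T.η.app (T.obj B.A)) ≫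
            (T.map (𝟙 A.A) ⊗ₘ T.map B.a) ≫ κ.κ A.A B.A ≫ T.map f ≫ Cc.a := by
          rw [id_tensor_comp, assoc, T.map_id]
      _ = (𝟙 (T.obj A.A) ⊗ₘ T.η.app (T.obj B.A)) ≫ κ.κ A.A (T.obj B.A) ≫
            T.map ((𝟙 A.A ⊗ₘ B.a) ≫ f) ≫ Cc.a := by
          rw [reassoc_of% (κ.natural (𝟙 A.A) B.a), T.map_comp, assoc]
      _ = (𝟙 (T.obj A.A) ⊗ₘ T.η.app (T.obj B.A)) ≫ κ.κ A.A (T.obj B.A) ≫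
            T.map ((T.η.app A.A ⊗ₘ 𝟙 (T.obj B.A)) ≫ κ.κ A.A B.A ≫ T.map f ≫ Cc.a) ≫ Cc.a := by
          rw [h1]
      _ = (𝟙 (T.obj A.A) ⊗ₘ T.η.app (T.obj B.A)) ≫
            (T.map (T.η.app A.A) ⊗ₘ T.map (𝟙 (T.obj B.A))) ≫ κ.κ (T.obj A.A) (T.obj B.A) ≫
            T.map (κ.κ A.A B.A) ≫ T.map (T.map f) ≫ T.map Cc.a ≫ Cc.a := by
          simp only [T.map_comp, assoc]
          rw [← reassoc_of% (κ.natural (T.η.app A.A) (𝟙 (T.obj B.A)))]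
      _ = (𝟙 (T.obj A.A) ⊗ₘ T.η.app (T.obj B.A)) ≫
            (T.map (T.η.app A.A) ⊗ₘ T.map (𝟙 (T.obj B.A))) ≫ κ.κ (T.obj A.A) (T.obj B.A) ≫
            T.map (κ.κ A.A B.A) ≫ T.map (T.map f) ≫ T.μ.app Cc.A ≫ Cc.a := by
          rw [Cc.assoc]
      _ = (𝟙 (T.obj A.A) ⊗ₘ T.η.app (T.obj B.A)) ≫
            (T.map (T.η.app A.A) ⊗ₘ T.map (𝟙 (T.obj B.A))) ≫ κ.κ (T.obj A.A) (T.obj B.A) ≫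
            T.map (κ.κ A.A B.A) ≫ T.μ.app (A.A ⊗ B.A) ≫ T.map f ≫ Cc.a := by
          rw [← T.μ.naturality_assoc f]; rfl
      _ = (𝟙 (T.obj A.A) ⊗ₘ T.η.app (T.obj B.A)) ≫
            (T.map (T.η.app A.A) ⊗ₘ T.map (𝟙 (T.obj B.A))) ≫
            (T.μ.app A.A ⊗ₘ T.μ.app B.A) ≫ κ.κ A.A B.A ≫ T.map f ≫ Cc.a := by
          rw [← reassoc_of% (κ.mu A.A B.A)]
      _ = κ.κ A.A B.A ≫ T.map f ≫ Cc.a := by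
          rw [tensorHom_comp_tensorHom_assoc, tensorHom_comp_tensorHom_assoc]
          simp
end

section
/- Let (T, κ) be a monoidal monad on a monoidal category C, (A,a) and (B,b) T-algebras, and f : T(A⊗B) → C a morphism. Then f coequalizes the pair (μ_{A⊗B}·Tκ_{A,B}, T(a⊗b)) if and only if f coequalizes the pair (μ_{A⊗B}·T(κ_{A,B}·(η_A·a ⊗ 1_{TB})), μ_{A⊗B}·T(κ_{A,B}·(1_{TA} ⊗ η_B·b))), both pairs having domain T(TA⊗TB). -/
open CategoryTheory Category MonoidalCategory Limits

universe v u

variable {C : Type u} [Category.{v} C] [MonoidalCategory C]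

section Aux

variable (T : Monad C) (κ : MonoidalMonadStr T) (A B : Monad.Algebra T)

/-- `κ_{TA,TB} ≫ T((aη ⊗ₘ 1) ≫ κ) ≫ μ = (Ta ⊗ₘ μ) ≫ κ`. -/
lemma aux_comp1 :
    κ.κ (T.obj A.A) (T.obj B.A) ≫
        T.map (((A.a ≫ T.η.app A.A) ⊗ₘ 𝟙 (T.obj B.A)) ≫ κ.κ A.A B.A) ≫
        T.μ.app (A.A ⊗ B.A)
      = (T.map A.a ⊗ₘ T.μ.app B.A) ≫ κ.κ A.A B.A := by
  rw [T.map_comp]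
  simp only [Category.assoc]
  have h1 : κ.κ (T.obj A.A) (T.obj B.A) ≫ T.map ((A.a ≫ T.η.app A.A) ⊗ₘ 𝟙 (T.obj B.A))
      = (T.map (A.a ≫ T.η.app A.A) ⊗ₘ T.map (𝟙 (T.obj B.A))) ≫ κ.κ (T.obj A.A) (T.obj B.A) :=
    (κ.natural _ _).symm
  rw [reassoc_of% h1, κ.mu, tensorHom_comp_tensorHom_assoc, T.map_id, id_comp, T.map_comp,
    Category.assoc, T.right_unit]
  simp

/-- `κ_{TA,TB} ≫ T((1 ⊗ₘ bη) ≫ κ) ≫ μ = (μ ⊗ₘ Tb) ≫ κ`. -/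
lemma aux_comp2 :
    κ.κ (T.obj A.A) (T.obj B.A) ≫
        T.map ((𝟙 (T.obj A.A) ⊗ₘ (B.a ≫ T.η.app B.A)) ≫ κ.κ A.A B.A) ≫
        T.μ.app (A.A ⊗ B.A)
      = (T.μ.app A.A ⊗ₘ T.map B.a) ≫ κ.κ A.A B.A := by
  rw [T.map_comp]
  simp only [Category.assoc]
  have h1 : κ.κ (T.obj A.A) (T.obj B.A) ≫ T.map (𝟙 (T.obj A.A) ⊗ₘ (B.a ≫ T.η.app B.A))
      = (T.map (𝟙 (T.obj A.A)) ⊗ₘ T.map (B.a ≫ T.η.app B.A)) ≫ κ.κ (T.obj A.A) (T.obj B.A) :=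
    (κ.natural _ _).symm
  rw [reassoc_of% h1, κ.mu, tensorHom_comp_tensorHom_assoc, T.map_id, id_comp, T.map_comp,
    Category.assoc, T.right_unit]
  simp

end Aux

/-- a morphism `f : T(A⊗B) ⟶ C` coequalizes `(μ·Tκ, T(a⊗b))`
iff it coequalizes `(μ·T(κ·(η·a ⊗ₘ 1)), μ·T(κ·(1 ⊗ₘ η·b)))`. -/
theorem coequalizes_iff_coequalizes
    (T : Monad C) (κ : MonoidalMonadStr T) (A B : Monad.Algebra T) {Z : C}
    (f : T.obj (A.A ⊗ B.A) ⟶ Z) :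
    (T.map (κ.κ A.A B.A) ≫ T.μ.app (A.A ⊗ B.A) ≫ f = T.map (A.a ⊗ₘ B.a) ≫ f) ↔
      (T.map (((A.a ≫ T.η.app A.A) ⊗ₘ 𝟙 (T.obj B.A)) ≫ κ.κ A.A B.A) ≫
            T.μ.app (A.A ⊗ B.A) ≫ f
        = T.map ((𝟙 (T.obj A.A) ⊗ₘ (B.a ≫ T.η.app B.A)) ≫ κ.κ A.A B.A) ≫
            T.μ.app (A.A ⊗ B.A) ≫ f) := by
  constructor
  · intro H
    rw [T.map_comp, Category.assoc, H, T.map_comp, Category.assoc, H,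
      ← T.map_comp_assoc, ← T.map_comp_assoc, tensorHom_comp_tensorHom, tensorHom_comp_tensorHom]
    simp [A.unit, B.unit]
  · intro E
    -- φ(u) := T.map u ≫ μ ≫ f
    -- lifted version of E: for any w : X ⟶ T(TA⊗TB),
    -- φ(w ≫ T(e₁κ) ≫ μ) = φ(w ≫ T(e₂κ) ≫ μ)
    have lift : ∀ {X : C} (w : X ⟶ T.obj (T.obj A.A ⊗ T.obj B.A)),
        T.map (w ≫ T.map (((A.a ≫ T.η.app A.A) ⊗ₘ 𝟙 (T.obj B.A)) ≫ κ.κ A.A B.A)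
            ≫ T.μ.app (A.A ⊗ B.A)) ≫ T.μ.app (A.A ⊗ B.A) ≫ f
          = T.map (w ≫ T.map ((𝟙 (T.obj A.A) ⊗ₘ (B.a ≫ T.η.app B.A)) ≫ κ.κ A.A B.A)
            ≫ T.μ.app (A.A ⊗ B.A)) ≫ T.μ.app (A.A ⊗ B.A) ≫ f := by
      intro X w
      simp only [T.map_comp, Category.assoc]
      rw [reassoc_of% (T.assoc (A.A ⊗ B.A))]
      have hnat : ∀ {X Y : C} (u : X ⟶ Y),
          T.map (T.map u) ≫ T.μ.app Y = T.μ.app X ≫ T.map u := by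
        intro X Y u
        have h := T.μ.naturality u
        simpa using h
      rw [reassoc_of% (hnat (κ.κ A.A B.A)),
        reassoc_of% (hnat ((A.a ≫ T.η.app A.A) ⊗ₘ 𝟙 (T.obj B.A))),
        reassoc_of% (hnat (𝟙 (T.obj A.A) ⊗ₘ (B.a ≫ T.η.app B.A))),
        ← T.map_comp_assoc, ← T.map_comp_assoc, E]
    -- instantiate with w₁ = (η_{TA} ⊗ₘ T η_B) ≫ κ_{TA,TB}
    have hw1 : ((T.η.app (T.obj A.A) ⊗ₘ T.map (T.η.app B.A)) ≫ κ.κ (T.obj A.A) (T.obj B.A))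
          ≫ T.map (((A.a ≫ T.η.app A.A) ⊗ₘ 𝟙 (T.obj B.A)) ≫ κ.κ A.A B.A)
          ≫ T.μ.app (A.A ⊗ B.A)
        = ((A.a ≫ T.η.app A.A) ⊗ₘ 𝟙 (T.obj B.A)) ≫ κ.κ A.A B.A := by
      rw [Category.assoc, aux_comp1 T κ A B, tensorHom_comp_tensorHom_assoc]
      congr 2
      · exact (T.η.naturality A.a).symm
      · exact T.right_unit B.A
    have hw2 : ((T.η.app (T.obj A.A) ⊗ₘ T.map (T.η.app B.A)) ≫ κ.κ (T.obj A.A) (T.obj B.A))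
          ≫ T.map ((𝟙 (T.obj A.A) ⊗ₘ (B.a ≫ T.η.app B.A)) ≫ κ.κ A.A B.A)
          ≫ T.μ.app (A.A ⊗ B.A)
        = κ.κ A.A B.A := by
      rw [Category.assoc, aux_comp2 T κ A B, tensorHom_comp_tensorHom_assoc, T.left_unit,
        ← T.map_comp, B.unit]
      simp
    have key1 : T.map (((A.a ≫ T.η.app A.A) ⊗ₘ 𝟙 (T.obj B.A)) ≫ κ.κ A.A B.A)
          ≫ T.μ.app (A.A ⊗ B.A) ≫ f
        = T.map (κ.κ A.A B.A) ≫ T.μ.app (A.A ⊗ B.A) ≫ f := by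
      have := lift ((T.η.app (T.obj A.A) ⊗ₘ T.map (T.η.app B.A)) ≫ κ.κ (T.obj A.A) (T.obj B.A))
      rw [hw1, hw2] at this
      exact this
    -- e₂ ≫ e₁ = aη ⊗ₘ bη ; precompose E with T e₂:
    have keyE : T.map (((A.a ≫ T.η.app A.A) ⊗ₘ (B.a ≫ T.η.app B.A)) ≫ κ.κ A.A B.A)
          ≫ T.μ.app (A.A ⊗ B.A) ≫ f
        = T.map ((𝟙 (T.obj A.A) ⊗ₘ (B.a ≫ T.η.app B.A)) ≫ κ.κ A.A B.A)
          ≫ T.μ.app (A.A ⊗ B.A) ≫ f := by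
      have h := congrArg (fun g => T.map (𝟙 (T.obj A.A) ⊗ₘ (B.a ≫ T.η.app B.A)) ≫ g) E
      simp only [← T.map_comp_assoc] at h
      have e1 : (𝟙 (T.obj A.A) ⊗ₘ (B.a ≫ T.η.app B.A))
            ≫ (((A.a ≫ T.η.app A.A) ⊗ₘ 𝟙 (T.obj B.A)) ≫ κ.κ A.A B.A)
          = ((A.a ≫ T.η.app A.A) ⊗ₘ (B.a ≫ T.η.app B.A)) ≫ κ.κ A.A B.A := by
        rw [tensorHom_comp_tensorHom_assoc, id_comp, comp_id]
      have e2 : (𝟙 (T.obj A.A) ⊗ₘ (B.a ≫ T.η.app B.A))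
            ≫ ((𝟙 (T.obj A.A) ⊗ₘ (B.a ≫ T.η.app B.A)) ≫ κ.κ A.A B.A)
          = (𝟙 (T.obj A.A) ⊗ₘ (B.a ≫ T.η.app B.A)) ≫ κ.κ A.A B.A := by
        rw [tensorHom_comp_tensorHom_assoc, id_comp, Category.assoc, reassoc_of% B.unit]
      rw [e1, e2] at h
      exact h
    -- T(a⊗b) ≫ f = T((aη⊗bη)≫κ) ≫ μ ≫ f
    have keyR : T.map (A.a ⊗ₘ B.a) ≫ f
        = T.map (((A.a ≫ T.η.app A.A) ⊗ₘ (B.a ≫ T.η.app B.A)) ≫ κ.κ A.A B.A)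
          ≫ T.μ.app (A.A ⊗ B.A) ≫ f := by
      have : ((A.a ≫ T.η.app A.A) ⊗ₘ (B.a ≫ T.η.app B.A)) ≫ κ.κ A.A B.A
          = (A.a ⊗ₘ B.a) ≫ T.η.app (A.A ⊗ B.A) := by
        rw [← tensorHom_comp_tensorHom, Category.assoc, κ.unit]
      rw [this, T.map_comp, Category.assoc, T.right_unit_assoc]
    rw [keyR, keyE, ← E, key1]
end

section
/- Let (T, κ) be a monoidal monad on a monoidal category C such that the tensor coequalizers q_{A,B} : T(A⊗B) → A ⊠ B exist in C^T. Then for T-algebras (A,a) and (B,b), q_{A,B} is also a coequalizer of the pair (μ·T(κ·(η·a ⊗ 1)), μ·T(κ·(1 ⊗ η·b))) : T(TA⊗TB) ⇉ T(A⊗B) in C^T. -/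
open CategoryTheory Category MonoidalCategory Limits

universe v u

variable {C : Type u} [Category.{v} C] [MonoidalCategory C]

/-- The Kleisli extension `μ · T g : T X ⟶ T Y` of `g : X ⟶ T Y`, as a morphism of
free `T`-algebras. -/
def freeHom (T : Monad C) {X Y : C} (g : X ⟶ T.obj Y) :
    (Monad.free T).obj X ⟶ (Monad.free T).obj Y where
  f := T.map g ≫ T.μ.app Y
  h := by
    change T.map (T.map g ≫ T.μ.app Y) ≫ T.μ.app Y = T.μ.app X ≫ T.map g ≫ T.μ.app Y
    rw [Functor.map_comp, Category.assoc, T.assoc Y, ← Category.assoc, ← Category.assoc]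
    congr 1
    exact T.μ.naturality g

/-- The transpose `c · T f : T X ⟶ C` of `f : X ⟶ C`, as a morphism from the free
`T`-algebra on `X` to the algebra `(C, c)`. -/
def transHom (T : Monad C) {X : C} {Cc : Monad.Algebra T} (f : X ⟶ Cc.A) :
    (Monad.free T).obj X ⟶ Cc where
  f := T.map f ≫ Cc.a
  h := by
    change T.map (T.map f ≫ Cc.a) ≫ Cc.a = T.μ.app X ≫ T.map f ≫ Cc.a
    rw [Functor.map_comp, Category.assoc, ← Cc.assoc, ← Category.assoc, ← Category.assoc]
    congr 1
    exact T.μ.naturality f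



section Aux

variable {T : Monad C} (κ : MonoidalMonadStr T) (A B : Monad.Algebra T)

@[simp] lemma freeHom_f {X Y : C} (g : X ⟶ T.obj Y) :
    (freeHom T g).f = T.map g ≫ T.μ.app Y := rfl

@[simp] lemma free_map_f {X Y : C} (u : X ⟶ Y) :
    ((Monad.free T).map u).f = T.map u := rfl

lemma eta_nat {X Y : C} (f : X ⟶ Y) : T.η.app X ≫ T.map f = f ≫ T.η.app Y := by
  simpa using (T.η.naturality f).symm

/-- Precomposing a Kleisli extension with the unit recovers the original map. -/
lemma eta_cancel {Z Y X : C} (u : Z ⟶ T.obj Y) (θ : T.obj Y ⟶ X) :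
    T.η.app Z ≫ T.map u ≫ T.μ.app Y ≫ θ = u ≫ θ := by
  rw [← Category.assoc, ← T.η.naturality u]
  simp

lemma claimA1 :
    (T.η.app (T.obj A.A) ⊗ₘ T.map (T.η.app B.A)) ≫ κ.κ (T.obj A.A) (T.obj B.A) ≫
        T.map (((A.a ≫ T.η.app A.A) ⊗ₘ 𝟙 (T.obj B.A)) ≫ κ.κ A.A B.A) ≫ T.μ.app (A.A ⊗ B.A)
      = ((A.a ≫ T.η.app A.A) ⊗ₘ 𝟙 (T.obj B.A)) ≫ κ.κ A.A B.A := by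
  have nat := reassoc_of% κ.natural (A.a ≫ T.η.app A.A) (𝟙 (T.obj B.A))
  have mu := κ.mu A.A B.A
  simp only [Functor.map_comp, Category.assoc]
  rw [← nat, mu, tensorHom_comp_tensorHom_assoc, tensorHom_comp_tensorHom_assoc]
  congr 2
  · simp only [Functor.map_comp, Category.assoc, T.right_unit]
    simp [eta_nat]
  · simp

lemma claimA2 :
    (T.η.app (T.obj A.A) ⊗ₘ T.map (T.η.app B.A)) ≫ κ.κ (T.obj A.A) (T.obj B.A) ≫
        T.map ((𝟙 (T.obj A.A) ⊗ₘ (B.a ≫ T.η.app B.A)) ≫ κ.κ A.A B.A) ≫ T.μ.app (A.A ⊗ B.A)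
      = κ.κ A.A B.A := by
  have nat := reassoc_of% κ.natural (𝟙 (T.obj A.A)) (B.a ≫ T.η.app B.A)
  have mu := κ.mu A.A B.A
  simp only [Functor.map_comp, Category.assoc]
  rw [← nat, mu, tensorHom_comp_tensorHom_assoc, tensorHom_comp_tensorHom_assoc]
  have h1 : T.η.app (T.obj A.A) ≫ T.map (𝟙 (T.obj A.A)) ≫ T.μ.app A.A = 𝟙 (T.obj A.A) := by
    simp
  have h2 : T.map (T.η.app B.A) ≫ T.map (B.a ≫ T.η.app B.A) ≫ T.μ.app B.A
      = 𝟙 (T.obj B.A) := by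
    simp only [Functor.map_comp, Category.assoc, T.right_unit]
    simp [← Functor.map_comp, B.unit]
  simp only [Category.assoc]
  rw [h1, h2]
  simp [tensorHom_id, id_tensorHom]

/-- The key cancellation lemma, at the level of the base category. -/
lemma key {X : C} (θ : T.obj (A.A ⊗ B.A) ⟶ X)
    (hyp : T.map (((A.a ≫ T.η.app A.A) ⊗ₘ 𝟙 (T.obj B.A)) ≫ κ.κ A.A B.A) ≫
          T.μ.app (A.A ⊗ B.A) ≫ θ
        = T.map ((𝟙 (T.obj A.A) ⊗ₘ (B.a ≫ T.η.app B.A)) ≫ κ.κ A.A B.A) ≫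
          T.μ.app (A.A ⊗ B.A) ≫ θ) :
    κ.κ A.A B.A ≫ θ = (A.a ⊗ₘ B.a) ≫ T.η.app (A.A ⊗ B.A) ≫ θ := by
  -- E2: precompose `hyp` with the unit
  have E2 : ((A.a ≫ T.η.app A.A) ⊗ₘ 𝟙 (T.obj B.A)) ≫ κ.κ A.A B.A ≫ θ
      = (𝟙 (T.obj A.A) ⊗ₘ (B.a ≫ T.η.app B.A)) ≫ κ.κ A.A B.A ≫ θ := by
    have := congrArg (fun t => T.η.app (T.obj A.A ⊗ T.obj B.A) ≫ t) hyp
    simpa only [eta_cancel, Category.assoc] using this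
  -- E1: precompose `hyp` with `(η_{TA} ⊗ Tη_B) ≫ κ`
  have E1 : ((A.a ≫ T.η.app A.A) ⊗ₘ 𝟙 (T.obj B.A)) ≫ κ.κ A.A B.A ≫ θ
      = κ.κ A.A B.A ≫ θ := by
    have h := congrArg (fun t => (T.η.app (T.obj A.A) ⊗ₘ T.map (T.η.app B.A)) ≫
      κ.κ (T.obj A.A) (T.obj B.A) ≫ t) hyp
    have c1 := reassoc_of% claimA1 κ A B
    have c2 := reassoc_of% claimA2 κ A B
    simpa only [c1, c2, Category.assoc] using h
  calc κ.κ A.A B.A ≫ θ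
      = (𝟙 (T.obj A.A) ⊗ₘ (B.a ≫ T.η.app B.A)) ≫ κ.κ A.A B.A ≫ θ := by rw [← E2, E1]
    _ = (𝟙 (T.obj A.A) ⊗ₘ (B.a ≫ T.η.app B.A)) ≫
          ((A.a ≫ T.η.app A.A) ⊗ₘ 𝟙 (T.obj B.A)) ≫ κ.κ A.A B.A ≫ θ := by rw [E1]
    _ = ((A.a ≫ T.η.app A.A) ⊗ₘ (B.a ≫ T.η.app B.A)) ≫ κ.κ A.A B.A ≫ θ := by
        rw [← Category.assoc, tensorHom_comp_tensorHom, Category.id_comp, Category.comp_id]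
    _ = (A.a ⊗ₘ B.a) ≫ (T.η.app A.A ⊗ₘ T.η.app B.A) ≫ κ.κ A.A B.A ≫ θ := by
        rw [tensorHom_comp_tensorHom_assoc]
    _ = (A.a ⊗ₘ B.a) ≫ T.η.app (A.A ⊗ B.A) ≫ θ := by
        rw [← Category.assoc (T.η.app A.A ⊗ₘ T.η.app B.A), κ.unit]

/-- Algebra-level version of the key lemma. -/
lemma key' {X : Monad.Algebra T} (h : (Monad.free T).obj (A.A ⊗ B.A) ⟶ X)
    (hyp : freeHom T (((A.a ≫ T.η.app A.A) ⊗ₘ 𝟙 (T.obj B.A)) ≫ κ.κ A.A B.A) ≫ h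
        = freeHom T ((𝟙 (T.obj A.A) ⊗ₘ (B.a ≫ T.η.app B.A)) ≫ κ.κ A.A B.A) ≫ h) :
    freeHom T (κ.κ A.A B.A) ≫ h = (Monad.free T).map (A.a ⊗ₘ B.a) ≫ h := by
  have hypf := congrArg Monad.Algebra.Hom.f hyp
  simp only [Monad.Algebra.comp_f, freeHom_f, Category.assoc] at hypf
  erw [Category.assoc, Category.assoc] at hypf
  have hkey := key κ A B h.f hypf
  have hh : T.μ.app (A.A ⊗ B.A) ≫ h.f = T.map h.f ≫ X.a := h.h.symm
  ext
  simp only [Monad.Algebra.comp_f, freeHom_f, free_map_f, Category.assoc]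
  erw [Category.assoc]
  calc T.map (κ.κ A.A B.A) ≫ T.μ.app (A.A ⊗ B.A) ≫ h.f
      = T.map (κ.κ A.A B.A) ≫ T.map h.f ≫ X.a := by erw [hh]; rfl
    _ = T.map (κ.κ A.A B.A ≫ h.f) ≫ X.a := by erw [Functor.map_comp, Category.assoc]
    _ = T.map ((A.a ⊗ₘ B.a) ≫ T.η.app (A.A ⊗ B.A) ≫ h.f) ≫ X.a := by rw [hkey]
    _ = T.map (A.a ⊗ₘ B.a) ≫ T.map (T.η.app (A.A ⊗ B.A)) ≫ T.map h.f ≫ X.a := by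
        erw [Functor.map_comp, Functor.map_comp, Category.assoc, Category.assoc]
    _ = T.map (A.a ⊗ₘ B.a) ≫ T.map (T.η.app (A.A ⊗ B.A)) ≫ T.μ.app (A.A ⊗ B.A) ≫ h.f := by
        erw [hh]; rfl
    _ = T.map (A.a ⊗ₘ B.a) ≫ h.f := by erw [T.right_unit_assoc]

end Aux

/-- if `q : T(A⊗B) ⟶ A ⊠ B` is the tensor-product coequalizer of
`(μ·Tκ, T(a⊗b))` in `C^T`, then it is also a coequalizer of
`(μ·T(κ·(η·a ⊗ 1)), μ·T(κ·(1 ⊗ η·b)))`. -/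
theorem tensor_coequalizer_of_guitart_pair
    (T : Monad C) (κ : MonoidalMonadStr T) (A B : Monad.Algebra T)
    {Q : Monad.Algebra T} (q : (Monad.free T).obj (A.A ⊗ B.A) ⟶ Q)
    (w : freeHom T (κ.κ A.A B.A) ≫ q = (Monad.free T).map (A.a ⊗ₘ B.a) ≫ q)
    (hq : Nonempty (IsColimit (Cofork.ofπ q w))) :
    ∃ w' : freeHom T (((A.a ≫ T.η.app A.A) ⊗ₘ 𝟙 (T.obj B.A)) ≫ κ.κ A.A B.A) ≫ q
         = freeHom T ((𝟙 (T.obj A.A) ⊗ₘ (B.a ≫ T.η.app B.A)) ≫ κ.κ A.A B.A) ≫ q,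
      Nonempty (IsColimit (Cofork.ofπ q w')) := by
    -- the new parallel pair is also coequalized by `q`
  have wf := congrArg Monad.Algebra.Hom.f w
  simp only [Monad.Algebra.comp_f, freeHom_f, free_map_f, Category.assoc] at wf
  have w' : freeHom T (((A.a ≫ T.η.app A.A) ⊗ₘ 𝟙 (T.obj B.A)) ≫ κ.κ A.A B.A) ≫ q
      = freeHom T ((𝟙 (T.obj A.A) ⊗ₘ (B.a ≫ T.η.app B.A)) ≫ κ.κ A.A B.A) ≫ q := by
    ext
    simp only [Monad.Algebra.comp_f, freeHom_f, Category.assoc, Functor.map_comp]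
    erw [Category.assoc] at wf
    refine ((Category.assoc _ _ _).trans (congrArg _ (Category.assoc _ _ _))).trans
      (Eq.trans ?_ ((Category.assoc _ _ _).trans (congrArg _ (Category.assoc _ _ _))).symm)
    erw [wf, ← Category.assoc, ← Category.assoc, ← Functor.map_comp, ← Functor.map_comp]
    have e1 : ((A.a ≫ T.η.app A.A) ⊗ₘ 𝟙 (T.obj B.A)) ≫ (A.a ⊗ₘ B.a) = A.a ⊗ₘ B.a := by
      rw [tensorHom_comp_tensorHom, Category.assoc, A.unit, Category.comp_id, Category.id_comp]
    have e2 : (𝟙 (T.obj A.A) ⊗ₘ (B.a ≫ T.η.app B.A)) ≫ (A.a ⊗ₘ B.a) = A.a ⊗ₘ B.a := by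
      rw [tensorHom_comp_tensorHom, Category.assoc, B.unit, Category.comp_id, Category.id_comp]
    rw [e1, e2]
  obtain ⟨hc⟩ := hq
  refine ⟨w', ⟨Cofork.IsColimit.mk _
    (fun s => hc.desc (Cofork.ofπ s.π (key' κ A B s.π s.condition)))
    (fun s => ?_) (fun s m hm => ?_)⟩⟩
  · simpa using hc.fac (Cofork.ofπ s.π (key' κ A B s.π s.condition)) WalkingParallelPair.one
  · apply Cofork.IsColimit.hom_ext hc
    have hfac := hc.fac (Cofork.ofπ s.π (key' κ A B s.π s.condition)) WalkingParallelPair.one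
    simp only [Cofork.π_ofπ] at hm ⊢
    rw [hm]
    simpa using hfac.symm
end

section
/- Let (T, κ) be a monoidal monad on a monoidal category C and (A,a), (B,b), (C,c) T-algebras. A morphism f : A⊗B → C is a bimorphism if and only if c · Tf : T(A⊗B) → C coequalizes the pair (μ_{A⊗B}·Tκ_{A,B}, T(a⊗b)). -/
open CategoryTheory Category MonoidalCategory Limits

universe v u

variable {C : Type u} [Category.{v} C] [MonoidalCategory C]

/-- `f` is a bimorphism iff `c · Tf` coequalizes
`(μ_{A⊗B}·Tκ_{A,B}, T(a⊗b))`. -/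
theorem isBimorphism_iff_coequalizes
    (T : Monad C) (κ : MonoidalMonadStr T) (A B Cc : Monad.Algebra T)
    (f : A.A ⊗ B.A ⟶ Cc.A) :
    IsBimorphism κ f ↔
      (T.map (κ.κ A.A B.A) ≫ T.μ.app (A.A ⊗ B.A) ≫ T.map f ≫ Cc.a
        = T.map (A.a ⊗ₘ B.a) ≫ T.map f ≫ Cc.a) := by
  constructor
  · intro h
    have hμ : T.μ.app (A.A ⊗ B.A) ≫ T.map f = T.map (T.map f) ≫ T.μ.app Cc.A :=
      (T.μ.naturality f).symm
    calc T.map (κ.κ A.A B.A) ≫ T.μ.app (A.A ⊗ B.A) ≫ T.map f ≫ Cc.a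
        = T.map (κ.κ A.A B.A) ≫ T.map (T.map f) ≫ T.μ.app Cc.A ≫ Cc.a := by
          rw [reassoc_of% hμ]
      _ = T.map (κ.κ A.A B.A) ≫ T.map (T.map f) ≫ T.map Cc.a ≫ Cc.a := by
          rw [Cc.assoc]
      _ = T.map (κ.κ A.A B.A ≫ T.map f ≫ Cc.a) ≫ Cc.a := by
          simp [T.map_comp]
      _ = T.map (A.a ⊗ₘ B.a) ≫ T.map f ≫ Cc.a := by
          rw [h]; simp [T.map_comp]
  · intro h
    have h' := congrArg (fun g => T.η.app (T.obj A.A ⊗ T.obj B.A) ≫ g) h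
    unfold IsBimorphism
    have l1 : T.η.app (T.obj A.A ⊗ T.obj B.A) ≫ T.map (κ.κ A.A B.A)
        = κ.κ A.A B.A ≫ T.η.app (T.obj (A.A ⊗ B.A)) := by simpa using (T.η.naturality _).symm
    have l2 : T.η.app (T.obj A.A ⊗ T.obj B.A) ≫ T.map (A.a ⊗ₘ B.a)
        = (A.a ⊗ₘ B.a) ≫ T.η.app (A.A ⊗ B.A) := by simpa using (T.η.naturality _).symm
    have l3 : T.η.app (A.A ⊗ B.A) ≫ T.map f = f ≫ T.η.app Cc.A := by simpa using (T.η.naturality f).symm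
    rw [reassoc_of% l1, reassoc_of% l2, reassoc_of% l3, T.left_unit_assoc] at h'
    simpa [Cc.unit] using h'
end

section
/- Let (T, κ) be a monoidal monad on a monoidal category C with tensors on C^T. If f : A⊗B → C is a bimorphism, then there is a unique C^T-morphism f̄ : A ⊠ B → C with f̄ · q_{A,B} = c · Tf. Conversely, for any C^T-morphism g : A ⊠ B → C, the composite g · q_{A,B} · η_{A⊗B} : A⊗B → C is a bimorphism whose induced morphism is g itself. -/
open CategoryTheory Category MonoidalCategory Limits

universe v u

variable {C : Type u} [Category.{v} C] [MonoidalCategory C]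

/-- bimorphisms `A ⊗ B ⟶ C` factor uniquely through the tensor
coequalizer `q : T(A⊗B) ⟶ A ⊠ B`, and conversely every `C^T`-morphism
`g : A ⊠ B ⟶ C` arises this way from the bimorphism `g · q · η`. -/
theorem bimorphism_factors_through_tensor
    (T : Monad C) (κ : MonoidalMonadStr T) (A B Cc : Monad.Algebra T)
    {Q : Monad.Algebra T} (q : (Monad.free T).obj (A.A ⊗ B.A) ⟶ Q)
    (w : freeHom T (κ.κ A.A B.A) ≫ q = (Monad.free T).map (A.a ⊗ₘ B.a) ≫ q)
    (hq : IsColimit (Cofork.ofπ q w)) :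
    (∀ f : A.A ⊗ B.A ⟶ Cc.A, IsBimorphism κ f →
        ∃! fbar : Q ⟶ Cc, q ≫ fbar = transHom T f) ∧
    (∀ g : Q ⟶ Cc,
        IsBimorphism κ (T.η.app (A.A ⊗ B.A) ≫ q.f ≫ g.f) ∧
        q ≫ g = transHom T (T.η.app (A.A ⊗ B.A) ≫ q.f ≫ g.f)) := by
  constructor
  · intro f hf
    have hf' : κ.κ A.A B.A ≫ T.map f ≫ Cc.a = (A.a ⊗ₘ B.a) ≫ f := hf
    have hcoeq : freeHom T (κ.κ A.A B.A) ≫ transHom T f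
        = (Monad.free T).map (A.a ⊗ₘ B.a) ≫ transHom T f := by
      ext
      change (T.map (κ.κ A.A B.A) ≫ T.μ.app (A.A ⊗ B.A)) ≫ T.map f ≫ Cc.a = T.map (A.a ⊗ₘ B.a) ≫ T.map f ≫ Cc.a
      have n1 := (T.μ.naturality f).symm
      dsimp at n1
      slice_lhs 2 3 => rw [n1]
      slice_lhs 3 4 => rw [Cc.assoc]
      slice_lhs 1 3 => rw [← Functor.map_comp, ← Functor.map_comp, hf']
      simp [Functor.map_comp]
    have hd : q ≫ Cofork.IsColimit.desc hq (transHom T f) hcoeq = transHom T f := by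
      exact Cofork.IsColimit.π_desc' hq _ _
    refine ⟨_, hd, ?_⟩
    intro y hy
    apply Cofork.IsColimit.hom_ext hq
    simp only [Cofork.π_ofπ]
    rw [hy, hd]
  · intro g
    have hw := congrArg Monad.Algebra.Hom.f w
    dsimp [freeHom] at hw
    have hqh := q.h
    set qf : T.obj (A.A ⊗ B.A) ⟶ Q.A := q.f with hqf
    change T.map qf ≫ Q.a = T.μ.app (A.A ⊗ B.A) ≫ qf at hqh
    change (T.map (κ.κ A.A B.A) ≫ T.μ.app (A.A ⊗ B.A)) ≫ qf = T.map (A.a ⊗ₘ B.a) ≫ qf at hw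
    have key : T.map (T.η.app (A.A ⊗ B.A) ≫ qf ≫ g.f) ≫ Cc.a = qf ≫ g.f := by
      simp only [Functor.map_comp, assoc]
      rw [g.h, ← assoc (T.map qf), hqh]
      simp only [← assoc]
      rw [T.right_unit, id_comp]
    constructor
    · show κ.κ A.A B.A ≫ T.map _ ≫ Cc.a = _
      rw [key]
      have h1 : (A.a ⊗ₘ B.a) ≫ T.η.app (A.A ⊗ B.A)
          = T.η.app (T.obj A.A ⊗ T.obj B.A) ≫ T.map (A.a ⊗ₘ B.a) := by
        simpa using (T.η.naturality (A.a ⊗ₘ B.a))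
      have n2 := T.η.naturality (κ.κ A.A B.A)
      dsimp at n2
      rw [← assoc (A.a ⊗ₘ B.a), h1, assoc, ← assoc (T.map (A.a ⊗ₘ B.a)), ← hw]
      simp only [← assoc]
      rw [← n2]
      simp only [assoc]
      rw [← assoc (T.η.app _) (T.μ.app _), T.left_unit, id_comp]
    · ext
      change qf ≫ g.f = T.map (T.η.app (A.A ⊗ B.A) ≫ qf ≫ g.f) ≫ Cc.a
      rw [key]
end

section
/- A functor F : X × Y → Z preserves reflexive coequalizers if and only if the partial functors F(X, −) : Y → Z and F(−, Y) : X → Z preserve reflexive coequalizers for all objects X of X and Y of Y. -/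
open CategoryTheory Category Limits

universe v₁ v₂ v₃ u₁ u₂ u₃

/-- A functor preserves reflexive coequalizers: it sends any colimit cofork over a
reflexive pair to a colimit cocone. -/
def PreservesReflexiveCoequalizersP {X : Type u₁} [Category.{v₁} X]
    {Z : Type u₃} [Category.{v₃} Z] (F : X ⥤ Z) : Prop :=
  ∀ {A B : X} (f g : A ⟶ B), IsReflexivePair f g →
    ∀ c : Cofork f g, Nonempty (IsColimit c) → Nonempty (IsColimit (F.mapCocone c))

section Aux

variable {C : Type u₁} [Category.{v₁} C] {D : Type u₂} [Category.{v₂} D]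

/-- ofπ-version of the preservation property, forward. -/
theorem aux_ofπ_of_preserves (G : C ⥤ D) (h : PreservesReflexiveCoequalizersP G)
    {A B : C} {f g : A ⟶ B} (hr : IsReflexivePair f g) {P : C} (π : B ⟶ P)
    (w : f ≫ π = g ≫ π) (hc : IsColimit (Cofork.ofπ π w)) :
    Nonempty (IsColimit (Cofork.ofπ (G.map π)
      (by simp only [← G.map_comp, w]) : Cofork (G.map f) (G.map g))) := by
  obtain ⟨hm⟩ := h f g hr _ ⟨hc⟩
  exact ⟨isColimitMapCoconeCoforkEquiv G w hm⟩

/-- ofπ-version of the preservation property, backward. -/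
theorem aux_preserves_of_ofπ (G : C ⥤ D)
    (h : ∀ {A B : C} {f g : A ⟶ B}, IsReflexivePair f g → ∀ {P : C} (π : B ⟶ P)
      (w : f ≫ π = g ≫ π), IsColimit (Cofork.ofπ π w) →
      Nonempty (IsColimit (Cofork.ofπ (G.map π)
        (by simp only [← G.map_comp, w]) : Cofork (G.map f) (G.map g)))) :
    PreservesReflexiveCoequalizersP G := by
  intro A B f g hr c hc
  obtain ⟨hc⟩ := hc
  have hc' : IsColimit (Cofork.ofπ c.π c.condition) :=
    IsColimit.ofIsoColimit hc (Cofork.isoCoforkOfπ c)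
  obtain ⟨h2⟩ := h hr c.π c.condition hc'
  have h3 : IsColimit (G.mapCocone (Cofork.ofπ c.π c.condition)) :=
    (isColimitMapCoconeCoforkEquiv G c.condition).symm h2
  exact ⟨IsColimit.ofIsoColimit h3
    ((Cocones.functoriality _ G).mapIso (Cofork.isoCoforkOfπ c)).symm⟩

/-- The identity cofork over the identity pair is a colimit. -/
def auxIdCofork (A : C) :
    IsColimit (Cofork.ofπ (𝟙 A) (rfl) : Cofork (𝟙 A) (𝟙 A)) :=
  Cofork.IsColimit.mk _ (fun s => s.π) (fun s => by simp) (fun s m hm => by simpa using hm)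

end Aux

section ProdAux

variable {X : Type u₁} [Category.{v₁} X] {Y : Type u₂} [Category.{v₂} Y]

@[simp] theorem aux_comp_fst {A B C : X × Y} (u : A ⟶ B) (v : B ⟶ C) :
    (u ≫ v).1 = u.1 ≫ v.1 := rfl

@[simp] theorem aux_comp_snd {A B C : X × Y} (u : A ⟶ B) (v : B ⟶ C) :
    (u ≫ v).2 = u.2 ≫ v.2 := rfl

@[simp] theorem aux_id_fst (A : X × Y) : (𝟙 A : A ⟶ A).1 = 𝟙 A.1 := rfl

@[simp] theorem aux_id_snd (A : X × Y) : (𝟙 A : A ⟶ A).2 = 𝟙 A.2 := rfl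

/-- First projection of a colimit cofork in a product category is a colimit cofork. -/
def auxFstIsColimit {A B P : X × Y} {f g : A ⟶ B} {π : B ⟶ P} {w : f ≫ π = g ≫ π}
    (hc : IsColimit (Cofork.ofπ π w)) :
    IsColimit (Cofork.ofπ π.1 (congrArg Prod.fst w) : Cofork f.1 g.1) := by
  have cond : ∀ s : Cofork f.1 g.1,
      f ≫ (show B ⟶ (s.pt, P.2) from (s.π, π.2)) = g ≫ (show B ⟶ (s.pt, P.2) from (s.π, π.2)) := fun s =>
    by
      refine Prod.ext ?_ ?_
      · simpa using s.condition
      · simpa using congrArg Prod.snd w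
  refine Cofork.IsColimit.mk _
    (fun s => (Cofork.IsColimit.desc hc (show B ⟶ (s.pt, P.2) from (s.π, π.2)) (cond s)).1)
    (fun s => ?_) (fun s m hm => ?_)
  · have hd := Cofork.IsColimit.π_desc' hc (show B ⟶ (s.pt, P.2) from (s.π, π.2)) (cond s)
    rw [Cofork.π_ofπ] at hd
    rw [Cofork.π_ofπ]
    exact congrArg Prod.fst hd
  · rw [Cofork.π_ofπ] at hm
    have hd := Cofork.IsColimit.π_desc' hc (show B ⟶ (s.pt, P.2) from (s.π, π.2)) (cond s)
    rw [Cofork.π_ofπ] at hd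
    have h2 : π ≫ (show P ⟶ (s.pt, P.2) from (m, 𝟙 P.2)) = (show B ⟶ (s.pt, P.2) from (s.π, π.2)) :=
      by
      refine Prod.ext ?_ ?_
      · simpa using hm
      · simp
    have h3 : (show P ⟶ (s.pt, P.2) from (m, 𝟙 P.2))
        = Cofork.IsColimit.desc hc (show B ⟶ (s.pt, P.2) from (s.π, π.2)) (cond s) :=
      Cofork.IsColimit.hom_ext hc (by rw [Cofork.π_ofπ, h2, hd])
    exact congrArg Prod.fst h3

/-- Second projection of a colimit cofork in a product category is a colimit cofork. -/
def auxSndIsColimit {A B P : X × Y} {f g : A ⟶ B} {π : B ⟶ P} {w : f ≫ π = g ≫ π}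
    (hc : IsColimit (Cofork.ofπ π w)) :
    IsColimit (Cofork.ofπ π.2 (congrArg Prod.snd w) : Cofork f.2 g.2) := by
  have cond : ∀ s : Cofork f.2 g.2,
      f ≫ (show B ⟶ (P.1, s.pt) from (π.1, s.π)) = g ≫ (show B ⟶ (P.1, s.pt) from (π.1, s.π)) := fun s =>
    by
      refine Prod.ext ?_ ?_
      · simpa using congrArg Prod.fst w
      · simpa using s.condition
  refine Cofork.IsColimit.mk _
    (fun s => (Cofork.IsColimit.desc hc (show B ⟶ (P.1, s.pt) from (π.1, s.π)) (cond s)).2)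
    (fun s => ?_) (fun s m hm => ?_)
  · have hd := Cofork.IsColimit.π_desc' hc (show B ⟶ (P.1, s.pt) from (π.1, s.π)) (cond s)
    rw [Cofork.π_ofπ] at hd
    rw [Cofork.π_ofπ]
    exact congrArg Prod.snd hd
  · rw [Cofork.π_ofπ] at hm
    have hd := Cofork.IsColimit.π_desc' hc (show B ⟶ (P.1, s.pt) from (π.1, s.π)) (cond s)
    rw [Cofork.π_ofπ] at hd
    have h2 : π ≫ (show P ⟶ (P.1, s.pt) from (𝟙 P.1, m)) = (show B ⟶ (P.1, s.pt) from (π.1, s.π)) :=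
      by
      refine Prod.ext ?_ ?_
      · simp
      · simpa using hm
    have h3 : (show P ⟶ (P.1, s.pt) from (𝟙 P.1, m))
        = Cofork.IsColimit.desc hc (show B ⟶ (P.1, s.pt) from (π.1, s.π)) (cond s) :=
      Cofork.IsColimit.hom_ext hc (by rw [Cofork.π_ofπ, h2, hd])
    exact congrArg Prod.snd h3

/-- Pairing: a cofork in a product category whose components are colimit coforks is colimit. -/
def auxPairIsColimit {A B P : X × Y} {f g : A ⟶ B} {π : B ⟶ P} {w : f ≫ π = g ≫ π}
    (h1 : IsColimit (Cofork.ofπ π.1 (congrArg Prod.fst w) : Cofork f.1 g.1))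
    (h2 : IsColimit (Cofork.ofπ π.2 (congrArg Prod.snd w) : Cofork f.2 g.2)) :
    IsColimit (Cofork.ofπ π w) := by
  refine Cofork.IsColimit.mk _
    (fun s => ((Cofork.IsColimit.desc h1 s.π.1 (by simpa using congrArg Prod.fst s.condition)),
               (Cofork.IsColimit.desc h2 s.π.2 (by simpa using congrArg Prod.snd s.condition))))
    (fun s => ?_) (fun s m hm => ?_)
  · have hd1 := Cofork.IsColimit.π_desc' h1 s.π.1
      (by simpa using congrArg Prod.fst s.condition)
    have hd2 := Cofork.IsColimit.π_desc' h2 s.π.2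
      (by simpa using congrArg Prod.snd s.condition)
    rw [Cofork.π_ofπ] at hd1 hd2
    rw [Cofork.π_ofπ]
    exact by
      refine Prod.ext ?_ ?_
      · simpa using hd1
      · simpa using hd2
  · rw [Cofork.π_ofπ] at hm
    have hd1 := Cofork.IsColimit.π_desc' h1 s.π.1
      (by simpa using congrArg Prod.fst s.condition)
    have hd2 := Cofork.IsColimit.π_desc' h2 s.π.2
      (by simpa using congrArg Prod.snd s.condition)
    rw [Cofork.π_ofπ] at hd1 hd2
    refine Prod.ext ?_ ?_
    · exact Cofork.IsColimit.hom_ext h1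
        (by rw [Cofork.π_ofπ, hd1]; simpa using congrArg Prod.fst hm)
    · exact Cofork.IsColimit.hom_ext h2
        (by rw [Cofork.π_ofπ, hd2]; simpa using congrArg Prod.snd hm)

end ProdAux

/-- `F : X × Y ⥤ Z` preserves reflexive coequalizers iff all the
partial functors `F(X, −)` and `F(−, Y)` do. -/
theorem preservesReflexiveCoequalizers_prod_iff
    {X : Type u₁} [Category.{v₁} X] {Y : Type u₂} [Category.{v₂} Y]
    {Z : Type u₃} [Category.{v₃} Z] (F : X × Y ⥤ Z) :
    PreservesReflexiveCoequalizersP F ↔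
      (∀ X₀ : X, PreservesReflexiveCoequalizersP (Prod.sectR X₀ Y ⋙ F)) ∧
      (∀ Y₀ : Y, PreservesReflexiveCoequalizersP (Prod.sectL X Y₀ ⋙ F)) := by
  constructor
  · intro hF
    constructor
    · intro X₀
      refine aux_preserves_of_ofπ _ ?_
      intro A B f g hr P π w hc
      obtain ⟨σ, hσf, hσg⟩ := hr.common_section'
      have hr' : IsReflexivePair (show (X₀, A) ⟶ (X₀, B) from (𝟙 X₀, f)) (show (X₀, A) ⟶ (X₀, B) from (𝟙 X₀, g)) := by
        refine IsReflexivePair.mk' (show (X₀, B) ⟶ (X₀, A) from (𝟙 X₀, σ)) ?_ ?_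
        · refine Prod.ext ?_ ?_
          · simp
          · simpa using hσf
        · refine Prod.ext ?_ ?_
          · simp
          · simpa using hσg
      have w' : (show (X₀, A) ⟶ (X₀, B) from (𝟙 X₀, f)) ≫ (show (X₀, B) ⟶ (X₀, P) from (𝟙 X₀, π)) =
          (show (X₀, A) ⟶ (X₀, B) from (𝟙 X₀, g)) ≫ (show (X₀, B) ⟶ (X₀, P) from (𝟙 X₀, π)) := by
        refine Prod.ext ?_ ?_
        · simp
        · simpa using w
      have hcol : IsColimit (Cofork.ofπ (show (X₀, B) ⟶ (X₀, P) from (𝟙 X₀, π)) w') :=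
        auxPairIsColimit (auxIdCofork X₀) hc
      exact aux_ofπ_of_preserves F hF hr' _ w' hcol
    · intro Y₀
      refine aux_preserves_of_ofπ _ ?_
      intro A B f g hr P π w hc
      obtain ⟨σ, hσf, hσg⟩ := hr.common_section'
      have hr' : IsReflexivePair (show (A, Y₀) ⟶ (B, Y₀) from (f, 𝟙 Y₀)) (show (A, Y₀) ⟶ (B, Y₀) from (g, 𝟙 Y₀)) := by
        refine IsReflexivePair.mk' (show (B, Y₀) ⟶ (A, Y₀) from (σ, 𝟙 Y₀)) ?_ ?_
        · refine Prod.ext ?_ ?_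
          · simpa using hσf
          · simp
        · refine Prod.ext ?_ ?_
          · simpa using hσg
          · simp
      have w' : (show (A, Y₀) ⟶ (B, Y₀) from (f, 𝟙 Y₀)) ≫ (show (B, Y₀) ⟶ (P, Y₀) from (π, 𝟙 Y₀)) =
          (show (A, Y₀) ⟶ (B, Y₀) from (g, 𝟙 Y₀)) ≫ (show (B, Y₀) ⟶ (P, Y₀) from (π, 𝟙 Y₀)) := by
        refine Prod.ext ?_ ?_
        · simpa using w
        · simp
      have hcol : IsColimit (Cofork.ofπ (show (B, Y₀) ⟶ (P, Y₀) from (π, 𝟙 Y₀)) w') :=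
        auxPairIsColimit hc (auxIdCofork Y₀)
      exact aux_ofπ_of_preserves F hF hr' _ w' hcol
  · rintro ⟨h1, h2⟩
    refine aux_preserves_of_ofπ _ ?_
    intro A B f g hr P π w hc
    obtain ⟨σ, hσf, hσg⟩ := hr.common_section'
    have hr1 : IsReflexivePair f.1 g.1 :=
      IsReflexivePair.mk' σ.1 (by simpa using congrArg Prod.fst hσf)
        (by simpa using congrArg Prod.fst hσg)
    have hr2 : IsReflexivePair f.2 g.2 :=
      IsReflexivePair.mk' σ.2 (by simpa using congrArg Prod.snd hσf)
        (by simpa using congrArg Prod.snd hσg)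
    have hπ1 := auxFstIsColimit hc
    have hπ2 := auxSndIsColimit hc
    obtain ⟨EA⟩ := aux_ofπ_of_preserves _ (h2 A.2) hr1 π.1 (congrArg Prod.fst w) hπ1
    obtain ⟨EB⟩ := aux_ofπ_of_preserves _ (h2 B.2) hr1 π.1 (congrArg Prod.fst w) hπ1
    obtain ⟨EP⟩ := aux_ofπ_of_preserves _ (h1 P.1) hr2 π.2 (congrArg Prod.snd w) hπ2
    haveI epiA : Epi (F.map (show (B.1, A.2) ⟶ (P.1, A.2) from (π.1, 𝟙 A.2))) := by
      have := epi_of_isColimit_cofork EA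
      rw [Cofork.π_ofπ] at this
      exact this
    haveI epiB : Epi (F.map (show (B.1, B.2) ⟶ (P.1, B.2) from (π.1, 𝟙 B.2))) := by
      have := epi_of_isColimit_cofork EB
      rw [Cofork.π_ofπ] at this
      exact this
    haveI epiP : Epi (F.map (show (P.1, B.2) ⟶ (P.1, P.2) from (𝟙 P.1, π.2))) := by
      have := epi_of_isColimit_cofork EP
      rw [Cofork.π_ofπ] at this
      exact this
    -- some morphism identities in X × Y
    have e1f : (show (A.1, B.2) ⟶ (A.1, A.2) from (𝟙 A.1, σ.2)) ≫ f
        = (show (A.1, B.2) ⟶ (B.1, B.2) from (f.1, 𝟙 B.2)) :=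
      by
      refine Prod.ext ?_ ?_
      · simp
      · simpa using congrArg Prod.snd hσf
    have e1g : (show (A.1, B.2) ⟶ (A.1, A.2) from (𝟙 A.1, σ.2)) ≫ g
        = (show (A.1, B.2) ⟶ (B.1, B.2) from (g.1, 𝟙 B.2)) :=
      by
      refine Prod.ext ?_ ?_
      · simp
      · simpa using congrArg Prod.snd hσg
    have e2f : (show (B.1, A.2) ⟶ (P.1, A.2) from (π.1, 𝟙 A.2)) ≫ (show (P.1, A.2) ⟶ (P.1, B.2) from (𝟙 P.1, f.2))
        = (show (B.1, A.2) ⟶ (B.1, B.2) from (𝟙 B.1, f.2)) ≫ (show (B.1, B.2) ⟶ (P.1, B.2) from (π.1, 𝟙 B.2)) :=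
      by refine Prod.ext ?_ ?_ <;> simp
    have e2g : (show (B.1, A.2) ⟶ (P.1, A.2) from (π.1, 𝟙 A.2)) ≫ (show (P.1, A.2) ⟶ (P.1, B.2) from (𝟙 P.1, g.2))
        = (show (B.1, A.2) ⟶ (B.1, B.2) from (𝟙 B.1, g.2)) ≫ (show (B.1, B.2) ⟶ (P.1, B.2) from (π.1, 𝟙 B.2)) :=
      by refine Prod.ext ?_ ?_ <;> simp
    have e3f : (show (B.1, A.2) ⟶ (A.1, A.2) from (σ.1, 𝟙 A.2)) ≫ f
        = (show (B.1, A.2) ⟶ (B.1, B.2) from (𝟙 B.1, f.2)) :=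
      by
      refine Prod.ext ?_ ?_
      · simpa using congrArg Prod.fst hσf
      · simp
    have e3g : (show (B.1, A.2) ⟶ (A.1, A.2) from (σ.1, 𝟙 A.2)) ≫ g
        = (show (B.1, A.2) ⟶ (B.1, B.2) from (𝟙 B.1, g.2)) :=
      by
      refine Prod.ext ?_ ?_
      · simpa using congrArg Prod.fst hσg
      · simp
    have e4 : (show (B.1, B.2) ⟶ (P.1, B.2) from (π.1, 𝟙 B.2)) ≫ (show (P.1, B.2) ⟶ (P.1, P.2) from (𝟙 P.1, π.2)) = π :=
      by refine Prod.ext ?_ ?_ <;> simp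
    have hmapπ : F.map π = F.map (show (B.1, B.2) ⟶ (P.1, B.2) from (π.1, 𝟙 B.2))
        ≫ F.map (show (P.1, B.2) ⟶ (P.1, P.2) from (𝟙 P.1, π.2)) := by
      rw [← F.map_comp, e4]
    haveI epiπ : Epi (F.map π) := by
      rw [hmapπ]; exact epi_comp _ _
    have hdesc : ∀ s : Cofork (F.map f) (F.map g),
        ∃ m : F.obj P ⟶ s.pt, F.map π ≫ m = s.π := by
      intro s
      -- Step 1 : s.π coequalizes F(f₁,1) and F(g₁,1)
      have hcoeq1 : F.map (show (A.1, B.2) ⟶ (B.1, B.2) from (f.1, 𝟙 B.2)) ≫ s.π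
          = F.map (show (A.1, B.2) ⟶ (B.1, B.2) from (g.1, 𝟙 B.2)) ≫ s.π := by
        rw [← e1f, ← e1g, F.map_comp, F.map_comp, assoc, assoc, s.condition]
      -- Step 2 : factor through F(π₁,1)
      have hk := Cofork.IsColimit.π_desc' EB s.π hcoeq1
      set k : F.obj (P.1, B.2) ⟶ s.pt := Cofork.IsColimit.desc EB s.π hcoeq1 with hkdef
      rw [Cofork.π_ofπ] at hk
      have hk2 : F.map (show (B.1, B.2) ⟶ (P.1, B.2) from (π.1, 𝟙 B.2)) ≫ k = s.π := hk
      -- Step 3 : k coequalizes F(1,f₂) and F(1,g₂)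
      have hcoeq2 : F.map (show (P.1, A.2) ⟶ (P.1, B.2) from (𝟙 P.1, f.2)) ≫ k
          = F.map (show (P.1, A.2) ⟶ (P.1, B.2) from (𝟙 P.1, g.2)) ≫ k := by
        rw [← cancel_epi (F.map (show (B.1, A.2) ⟶ (P.1, A.2) from (π.1, 𝟙 A.2)))]
        calc F.map (show (B.1, A.2) ⟶ (P.1, A.2) from (π.1, 𝟙 A.2))
              ≫ F.map (show (P.1, A.2) ⟶ (P.1, B.2) from (𝟙 P.1, f.2)) ≫ k
            = F.map (show (B.1, A.2) ⟶ (B.1, B.2) from (𝟙 B.1, f.2))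
              ≫ F.map (show (B.1, B.2) ⟶ (P.1, B.2) from (π.1, 𝟙 B.2)) ≫ k := by
              rw [← assoc, ← F.map_comp, e2f, F.map_comp, assoc]
          _ = F.map (show (B.1, A.2) ⟶ (B.1, B.2) from (𝟙 B.1, f.2)) ≫ s.π := by rw [hk2]
          _ = F.map (show (B.1, A.2) ⟶ (A.1, A.2) from (σ.1, 𝟙 A.2)) ≫ F.map f ≫ s.π := by
              rw [← e3f, F.map_comp, assoc]
          _ = F.map (show (B.1, A.2) ⟶ (A.1, A.2) from (σ.1, 𝟙 A.2)) ≫ F.map g ≫ s.π := by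
              rw [s.condition]
          _ = F.map (show (B.1, A.2) ⟶ (B.1, B.2) from (𝟙 B.1, g.2)) ≫ s.π := by
              rw [← assoc, ← F.map_comp, e3g]
          _ = F.map (show (B.1, A.2) ⟶ (B.1, B.2) from (𝟙 B.1, g.2))
              ≫ F.map (show (B.1, B.2) ⟶ (P.1, B.2) from (π.1, 𝟙 B.2)) ≫ k := by rw [hk2]
          _ = F.map (show (B.1, A.2) ⟶ (P.1, A.2) from (π.1, 𝟙 A.2))
              ≫ F.map (show (P.1, A.2) ⟶ (P.1, B.2) from (𝟙 P.1, g.2)) ≫ k := by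
              rw [← assoc, ← F.map_comp, ← e2g, F.map_comp, assoc]
      -- Step 4 : factor through F(1,π₂)
      have hm := Cofork.IsColimit.π_desc' EP k hcoeq2
      set m : F.obj (P.1, P.2) ⟶ s.pt := Cofork.IsColimit.desc EP k hcoeq2 with hmdef
      rw [Cofork.π_ofπ] at hm
      have hm2 : F.map (show (P.1, B.2) ⟶ (P.1, P.2) from (𝟙 P.1, π.2)) ≫ m = k := hm
      refine ⟨m, ?_⟩
      rw [hmapπ, assoc, hm2, hk2]
    refine ⟨Cofork.IsColimit.mk _ (fun s => (hdesc s).choose) (fun s => ?_) (fun s m' hm' => ?_)⟩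
    · rw [Cofork.π_ofπ]
      exact (hdesc s).choose_spec
    · rw [Cofork.π_ofπ] at hm'
      rw [← cancel_epi (F.map π), hm', (hdesc s).choose_spec]
end
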